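/- Let κ : I → ℝ be a positive differentiable function on an open interval I with s + c > 0 on I, satisfying a·κ(s) = ((s + c)/κ(s))' for all s ∈ I, where a > 0 and c ∈ ℝ are constants. Then there exists b ∈ ℝ such that κ(s) = (s + c) / √(a·s·(s + 2c) + b) for all s ∈ I. -/

import Mathlib

theorem stmt_10 (x y a c : ℝ) (ha : 0 < a) (κ : ℝ → ℝ)
    (hpos : ∀ s ∈ Set.Ioo x y, 0 < κ s)
    (hsc : ∀ s ∈ Set.Ioo x y, 0 < s + c)
    (hode : ∀ s ∈ Set.Ioo x y,
      HasDerivAt (fun t => (t + c) / κ t) (a * κ s) s) :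
    ∃ b : ℝ, ∀ s ∈ Set.Ioo x y,
      κ s = (s + c) / Real.sqrt (a * s * (s + 2 * c) + b) := by
  rcases Set.eq_empty_or_nonempty (Set.Ioo x y) with he | ⟨s₀, hs₀⟩
  · exact ⟨0, fun s hs => absurd hs (he ▸ id)⟩
  set f : ℝ → ℝ := fun t => (t + c) / κ t with hf
  set g : ℝ → ℝ := fun t => (f t) ^ 2 - a * t * (t + 2 * c) with hgdef
  have hfpos : ∀ s ∈ Set.Ioo x y, 0 < f s := fun s hs =>
    div_pos (hsc s hs) (hpos s hs)
  have hg : ∀ s ∈ Set.Ioo x y, HasDerivAt g 0 s := by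
    intro s hs
    have h1 : HasDerivAt (fun t => (f t) ^ 2) (2 * f s * (a * κ s)) s := by
      simpa using ((hode s hs).fun_pow 2)
    have h2 : HasDerivAt (fun t => a * t * (t + 2 * c)) (a * (s + 2 * c) + a * s) s := by
      have := ((hasDerivAt_id s).const_mul a).fun_mul
        ((hasDerivAt_id s).add_const (2 * c))
      simpa [mul_comm, mul_assoc] using this
    have hkne : κ s ≠ 0 := (hpos s hs).ne'
    have hfk : f s * κ s = s + c := by
      show (s + c) / κ s * κ s = s + c
      exact div_mul_cancel₀ _ hkne
    have : 2 * f s * (a * κ s) - (a * (s + 2 * c) + a * s) = 0 := by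
      have : 2 * (f s * κ s) * a - (a * (s + 2 * c) + a * s) = 0 := by
        rw [hfk]; ring
      linarith [this]
    simpa [hgdef, this] using (h1.fun_sub h2)
  have hconst : ∀ s ∈ Set.Ioo x y, g s = g s₀ := by
    intro s hs
    apply (convex_Ioo x y).is_const_of_fderivWithin_eq_zero
      (fun z hz => ((hg z hz).differentiableAt).differentiableWithinAt)
      _ hs hs₀
    intro z hz
    have := ((hg z hz).hasFDerivAt.hasFDerivWithinAt).fderivWithin
      (isOpen_Ioo.uniqueDiffOn z hz)
    rw [this]
    ext v
    simp
  refine ⟨g s₀, fun s hs => ?_⟩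
  have hgs : (f s) ^ 2 = a * s * (s + 2 * c) + g s₀ := by
    have h := hconst s hs
    simp only [hgdef] at h ⊢
    linarith [h]
  have hsq : Real.sqrt (a * s * (s + 2 * c) + g s₀) = f s := by
    rw [← hgs, Real.sqrt_sq (hfpos s hs).le]
  rw [hsq, hf]
  have hkne : κ s ≠ 0 := (hpos s hs).ne'
  have hscne : s + c ≠ 0 := (hsc s hs).ne'
  field_simp
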